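/- Let f > 0 and f′ be real numbers (values of the refraction profile and its derivative at ρ), and set v² = ρ²ω² + 1. If 2f² − 1 < 0 and 2f + ρ f′ ∈ [−(2f²−1)²/(4f), 0) ∪ (0, 2f), then ω₀ = ±(1/ρ)√((2f²−1±√Δ)/(2f(2f+ρf′)) − 1), with Δ = (1−2f²)² + 4f(2f+ρf′) ≥ 0, solves the equation ρω² + f f′ v⁴/(1+2f²v²) = 0 (whenever the expression under the square root is nonnegative). -/

import Mathlib

/-- under the stated sign conditions (`2f² − 1 < 0` and
`2f + ρf′ ∈ [−(2f²−1)²/(4f), 0) ∪ (0, 2f)`), the discriminant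
`Δ = (1−2f²)² + 4f(2f+ρf′)` is nonnegative, and
`ω₀ = ±(1/ρ)√((2f²−1±√Δ)/(2f(2f+ρf′)) − 1)` solves `ρω² + f f′ v⁴/(1+2f²v²) = 0`
with `v² = ρ²ω² + 1`, whenever the expression under the square root is nonnegative. -/
theorem helix_angular_velocity_solutions
    (ρ f f' : ℝ) (hρ : 0 < ρ) (hf : 0 < f)
    (Δ : ℝ) (hΔ : Δ = (1 - 2 * f ^ 2) ^ 2 + 4 * f * (2 * f + ρ * f'))
    (h1 : 2 * f ^ 2 - 1 < 0)
    (h2 : 2 * f + ρ * f' ∈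
      Set.Ico (-(2 * f ^ 2 - 1) ^ 2 / (4 * f)) 0 ∪ Set.Ioo 0 (2 * f))
    (ε₁ ε₂ : ℝ) (hε₁ : ε₁ = 1 ∨ ε₁ = -1) (hε₂ : ε₂ = 1 ∨ ε₂ = -1)
    (hinner : 0 ≤ (2 * f ^ 2 - 1 + ε₂ * Real.sqrt Δ) / (2 * f * (2 * f + ρ * f')) - 1) :
    0 ≤ Δ ∧
    ∀ ω : ℝ,
      ω = ε₁ * (1 / ρ) *
        Real.sqrt ((2 * f ^ 2 - 1 + ε₂ * Real.sqrt Δ) / (2 * f * (2 * f + ρ * f')) - 1) →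
      ρ * ω ^ 2 + f * f' * (ρ ^ 2 * ω ^ 2 + 1) ^ 2
          / (1 + 2 * f ^ 2 * (ρ ^ 2 * ω ^ 2 + 1)) = 0 := by
  have hA : 2 * f + ρ * f' ≠ 0 := by
    rcases h2 with h | h
    · exact ne_of_lt h.2
    · exact ne_of_gt h.1
  have hΔ0 : 0 ≤ Δ := by
    rcases h2 with h | h
    · have h := h.1
      have h4 : (0:ℝ) < 4 * f := by linarith
      rw [div_le_iff₀ h4] at h
      nlinarith [sq_nonneg (2 * f^2 - 1)]
    · have h := h.1
      nlinarith [sq_nonneg (1 - 2 * f^2)]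
  refine ⟨hΔ0, ?_⟩
  intro ω hω
  set s : ℝ := (2 * f ^ 2 - 1 + ε₂ * Real.sqrt Δ) / (2 * f * (2 * f + ρ * f')) with hs
  have hsq : Real.sqrt Δ ^ 2 = Δ := Real.sq_sqrt hΔ0
  have hε₂sq : ε₂ ^ 2 = 1 := by rcases hε₂ with h | h <;> simp [h]
  have hfA : 2 * f * (2 * f + ρ * f') ≠ 0 := by
    intro h; exact hA (by nlinarith [h] : 2 * f + ρ * f' = 0)
  have hquad : f * (2 * f + ρ * f') * s ^ 2 - (2 * f ^ 2 - 1) * s - 1 = 0 := by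
    have h2s : (ε₂ * Real.sqrt Δ) ^ 2 = Δ := by
      rw [mul_pow, hε₂sq, hsq, one_mul]
    rw [hs]
    have hA' : f * 2 + ρ * f' ≠ 0 := by rwa [mul_comm f 2]
    field_simp
    linear_combination h2s + hΔ
  have hε₁sq : ε₁ ^ 2 = 1 := by rcases hε₁ with h | h <;> simp [h]
  have hω2 : ρ ^ 2 * ω ^ 2 + 1 = s := by
    have h' : Real.sqrt (s - 1) ^ 2 = s - 1 := Real.sq_sqrt hinner
    rw [hω]
    field_simp
    nlinarith [h', hε₁sq]
  have hs1 : 1 ≤ s := by linarith [hinner]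
  have hden : (0:ℝ) < 1 + 2 * f ^ 2 * s := by nlinarith
  have hωsq : ω ^ 2 = (s - 1) / ρ ^ 2 := by
    field_simp
    linarith [hω2]
  rw [hω2, hωsq]
  have hden' := hden.ne'
  clear_value s
  field_simp
  linear_combination hquad
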